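/- Let N₁ ≤ N₂ be positive integers and let x ∈ I with x ≤ μ. Then P(∃ n with N₁ ≤ n ≤ N₂ such that μ̂_n ≤ x) ≤ exp(−N₁ · kl(x, μ)), and also P(∃ n with N₁ ≤ n ≤ N₂ such that μ̂_n ≤ x) ≤ exp(−N₁ (x − μ)²/(2V)). -/

import Mathlib

open MeasureTheory Real Set
open scoped ENNReal NNReal

/-- (Maximal inequality, lower tail.) Let `1 ≤ N₁ ≤ N₂` and `x ∈ I` with
`x ≤ μ`. Then `P(∃ n, N₁ ≤ n ≤ N₂, μ̂ₙ ≤ x) ≤ exp (-N₁ · kl x μ)` and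
`P(∃ n, N₁ ≤ n ≤ N₂, μ̂ₙ ≤ x) ≤ exp (-N₁ (x - μ)² / (2V))`. -/
theorem maximal_inequality_lower
    (ρ : Measure ℝ) [SigmaFinite ρ]
    (Θ : Set ℝ) (hΘ : Θ = {θ : ℝ | Integrable (fun x => exp (θ * x)) ρ})
    (b b' b'' : ℝ → ℝ)
    (hb : ∀ θ ∈ Θ, b θ = log (∫ x, exp (θ * x) ∂ρ))
    (hb' : ∀ θ ∈ interior Θ, HasDerivAt b (b' θ) θ)
    (hb'' : ∀ θ ∈ interior Θ, HasDerivAt b' (b'' θ) θ)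
    (hbpos : ∀ θ ∈ interior Θ, 0 < b'' θ)
    (Iset : Set ℝ) (hI : Iset = b' '' (interior Θ))
    (kl : ℝ → ℝ → ℝ)
    (hkl : ∀ θ ∈ interior Θ, ∀ θ' ∈ interior Θ,
      kl (b' θ) (b' θ') = b θ' - b θ - b' θ * (θ' - θ))
    (V : ℝ) (hV : 0 < V) (hbV : ∀ θ ∈ interior Θ, b'' θ ≤ V)
    (θ : ℝ) (hθ : θ ∈ interior Θ)
    (ν : Measure ℝ) (hν : ν = ρ.withDensity (fun x => ENNReal.ofReal (exp (θ * x - b θ))))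
    (μ : ℝ) (hμ : μ = b' θ)
    (Ω : Type*) [MeasurableSpace Ω] (P : Measure Ω) [IsProbabilityMeasure P]
    (X : ℕ → Ω → ℝ) (hXmeas : ∀ i, Measurable (X i))
    (hXlaw : ∀ i, Measure.map (X i) P = ν)
    (hXindep : ProbabilityTheory.iIndepFun X P)
    (μhat : ℕ → Ω → ℝ) (hμhat : ∀ s ω, μhat s ω = (∑ i ∈ Finset.range s, X i ω) / s)
    (N₁ N₂ : ℕ) (hN₁ : 1 ≤ N₁) (hN : N₁ ≤ N₂)
    (x : ℝ) (hx : x ∈ Iset) (hxμ : x ≤ μ) :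
    P {ω | ∃ n, N₁ ≤ n ∧ n ≤ N₂ ∧ μhat n ω ≤ x} ≤
        ENNReal.ofReal (exp (-(N₁ : ℝ) * kl x μ)) ∧
      P {ω | ∃ n, N₁ ≤ n ∧ n ≤ N₂ ∧ μhat n ω ≤ x} ≤
        ENNReal.ofReal (exp (-(N₁ : ℝ) * (x - μ) ^ 2 / (2 * V))) := by
  classical
  -- θx with b' θx = x
  rw [hI] at hx
  obtain ⟨θx, hθx, hθx2⟩ := hx
  -- Θ is convex
  have hΘconv : Convex ℝ Θ := by
    intro θ₁ h₁ θ₂ h₂ a c ha hc hac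
    rw [hΘ, Set.mem_setOf_eq] at h₁ h₂ ⊢
    refine (h₁.add h₂).mono' ?_ ?_
    · exact (Real.measurable_exp.comp (measurable_id.const_mul _)).aestronglyMeasurable
    · filter_upwards with y
      rw [Real.norm_eq_abs, abs_of_pos (exp_pos _)]
      have h1 : (a • θ₁ + c • θ₂) * y ≤ max (θ₁ * y) (θ₂ * y) := by
        simp only [smul_eq_mul]
        rcases le_total (θ₁ * y) (θ₂ * y) with h | h
        · rw [max_eq_right h]
          have h5 : a * (θ₁ * y) ≤ a * (θ₂ * y) := mul_le_mul_of_nonneg_left h ha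
          have h6 : a * (θ₂ * y) + c * (θ₂ * y) = θ₂ * y := by rw [← add_mul, hac, one_mul]
          nlinarith
        · rw [max_eq_left h]
          have h5 : c * (θ₂ * y) ≤ c * (θ₁ * y) := mul_le_mul_of_nonneg_left h hc
          have h6 : a * (θ₁ * y) + c * (θ₁ * y) = θ₁ * y := by rw [← add_mul, hac, one_mul]
          nlinarith
      calc exp ((a • θ₁ + c • θ₂) * y) ≤ exp (max (θ₁ * y) (θ₂ * y)) := exp_le_exp.2 h1
        _ ≤ exp (θ₁ * y) + exp (θ₂ * y) := by
            rcases max_cases (θ₁ * y) (θ₂ * y) with ⟨h, _⟩ | ⟨h, _⟩ <;> rw [h]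
            · exact le_add_of_nonneg_right (exp_pos _).le
            · exact le_add_of_nonneg_left (exp_pos _).le
  have hintconv : Convex ℝ (interior Θ) := hΘconv.interior
  have hIcc : ∀ s ∈ interior Θ, ∀ t ∈ interior Θ, Icc s t ⊆ interior Θ := fun s hs t ht =>
    hintconv.ordConnected.out hs ht
  -- b' is monotone on interior Θ
  have hb'le : ∀ s ∈ interior Θ, ∀ t ∈ interior Θ, s ≤ t → b' s ≤ b' t := by
    intro s hs t ht hst
    have hsub : Icc s t ⊆ interior Θ := hIcc s hs t ht
    have hm : MonotoneOn b' (Icc s t) := by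
      apply monotoneOn_of_deriv_nonneg (convex_Icc s t)
      · exact fun u hu => ((hb'' u (hsub hu)).continuousAt).continuousWithinAt
      · exact fun u hu =>
          ((hb'' u (hsub (interior_subset hu))).differentiableAt).differentiableWithinAt
      · intro u hu
        rw [(hb'' u (hsub (interior_subset hu))).deriv]
        exact (hbpos u (hsub (interior_subset hu))).le
    exact hm (left_mem_Icc.2 hst) (right_mem_Icc.2 hst) hst
  -- θx ≤ θ
  have hθxθ : θx ≤ θ := by
    by_contra hlt
    push_neg at hlt
    have hsub : Icc θ θx ⊆ interior Θ := hIcc θ hθ θx hθx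
    have hm : StrictMonoOn b' (Icc θ θx) := by
      apply strictMonoOn_of_deriv_pos (convex_Icc θ θx)
      · exact fun u hu => ((hb'' u (hsub hu)).continuousAt).continuousWithinAt
      · intro u hu
        rw [(hb'' u (hsub (interior_subset hu))).deriv]
        exact hbpos u (hsub (interior_subset hu))
    have := hm (left_mem_Icc.2 hlt.le) (right_mem_Icc.2 hlt.le) hlt
    rw [hθx2, ← hμ] at this
    linarith
  -- kl identity
  have hklx : kl x μ = b θ - b θx - x * (θ - θx) := by
    rw [← hθx2, hμ, hkl θx hθx θ hθ, hθx2]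
  -- quadratic lower bound on kl
  have hklq : (x - μ) ^ 2 / (2 * V) ≤ kl x μ := by
    have hsub : Icc θx θ ⊆ interior Θ := hIcc θx hθx θ hθ
    have hGd : ∀ u ∈ interior Θ,
        HasDerivAt (fun s => b s - b θx - x * (s - θx) - (b' s - x) ^ 2 / (2 * V))
          (b' u - x - 2 * (b' u - x) ^ 1 * b'' u / (2 * V)) u := by
      intro u hu
      have h1 : HasDerivAt (fun s => b s - b θx - x * (s - θx)) (b' u - x) u := by
        have := ((hb' u hu).sub_const (b θx)).sub
          (((hasDerivAt_id u).sub_const θx).const_mul x)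
        exact this.congr_deriv (by ring)
      have h2 : HasDerivAt (fun s => (b' s - x) ^ 2 / (2 * V))
          (2 * (b' u - x) ^ 1 * b'' u / (2 * V)) u := by
        have := (((hb'' u hu).sub_const x).pow 2).div_const (2 * V)
        simpa using this
      exact h1.sub h2
    have hm : MonotoneOn (fun s => b s - b θx - x * (s - θx) - (b' s - x) ^ 2 / (2 * V))
        (Icc θx θ) := by
      apply monotoneOn_of_deriv_nonneg (convex_Icc θx θ)
      · exact fun u hu => ((hGd u (hsub hu)).continuousAt).continuousWithinAt
      · exact fun u hu =>
          ((hGd u (hsub (interior_subset hu))).differentiableAt).differentiableWithinAt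
      · intro u hu
        have hu1 : u ∈ Icc θx θ := interior_subset hu
        have hu2 : u ∈ interior Θ := hsub hu1
        rw [(hGd u hu2).deriv]
        have hxu : x ≤ b' u := by
          rw [← hθx2]; exact hb'le θx hθx u hu2 hu1.1
        have hVu : b'' u ≤ V := hbV u hu2
        have hbu : 0 < b'' u := hbpos u hu2
        have key : (b' u - x) * (V - b'' u) ≥ 0 :=
          mul_nonneg (by linarith) (by linarith)
        have h2V : (0:ℝ) < 2 * V := by linarith
        rw [sub_nonneg, div_le_iff₀ h2V]
        nlinarith [key]
    have h0 := hm (left_mem_Icc.2 hθxθ) (right_mem_Icc.2 hθxθ) hθxθ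
    simp only at h0
    have e1 : b θx - b θx - x * (θx - θx) - (b' θx - x) ^ 2 / (2 * V) = 0 := by
      rw [hθx2]; ring
    have e2 : b θ - b θx - x * (θ - θx) - (b' θ - x) ^ 2 / (2 * V)
        = kl x μ - (x - μ) ^ 2 / (2 * V) := by
      rw [← hμ, ← hklx]; ring
    linarith [h0, e1, e2]
  have hK0 : 0 ≤ kl x μ := le_trans (by positivity) hklq
  -- ρ is nonzero
  have hνprob : IsProbabilityMeasure ν := by
    have := Measure.isProbabilityMeasure_map (μ := P) (hXmeas 0).aemeasurable
    rwa [hXlaw 0] at this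
  have hρ0 : ρ ≠ 0 := by
    intro h
    have huniv : ν Set.univ = 1 := hνprob.measure_univ
    rw [hν, h, withDensity_apply _ MeasurableSet.univ] at huniv
    simp at huniv
  -- integrability and normalization at θx
  have hθxΘ : θx ∈ Θ := interior_subset hθx
  have hint_x : Integrable (fun y => exp (θx * y)) ρ := by
    rw [hΘ, Set.mem_setOf_eq] at hθxΘ; exact hθxΘ
  have hcpos : 0 < ∫ y, exp (θx * y) ∂ρ := by
    rw [integral_pos_iff_support_of_nonneg (fun y => (exp_pos _).le) hint_x]
    have hsupp : Function.support (fun y => exp (θx * y)) = Set.univ :=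
      Set.eq_univ_iff_forall.2 fun y => (exp_pos _).ne'
    rw [hsupp]
    exact Measure.measure_univ_pos.2 hρ0
  have hbθx_exp : exp (b θx) = ∫ y, exp (θx * y) ∂ρ := by
    rw [hb θx (interior_subset hθx)]
    exact exp_log hcpos
  have htarget_int : Integrable (fun y => exp (θx * y - b θx)) ρ := by
    simp_rw [Real.exp_sub]
    exact hint_x.div_const _
  have htarget_val : ∫ y, exp (θx * y - b θx) ∂ρ = 1 := by
    simp_rw [Real.exp_sub]
    rw [integral_div, ← hbθx_exp, div_self (exp_ne_zero _)]
  -- the exponential weight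
  obtain ⟨lam, hlamdef⟩ : ∃ l, l = θx - θ := ⟨_, rfl⟩
  obtain ⟨ψ, hψdef⟩ : ∃ p, p = b θx - b θ := ⟨_, rfl⟩
  have hlam0 : lam ≤ 0 := by rw [hlamdef]; linarith
  obtain ⟨g, hgdef⟩ : ∃ g : ℝ → ℝ, g = fun y => exp (lam * y - ψ) := ⟨_, rfl⟩
  have hgmeas : Measurable g := by
    rw [hgdef]
    exact Real.measurable_exp.comp ((measurable_id.const_mul lam).sub_const ψ)
  have hfactor : ∀ y, exp (θ * y - b θ) * g y = exp (θx * y - b θx) := by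
    intro y
    rw [hgdef, ← Real.exp_add]
    congr 1
    rw [hlamdef, hψdef]; ring
  -- density as ℝ≥0
  obtain ⟨dens, hdensdef⟩ : ∃ d : ℝ → ℝ≥0, d = fun y => (exp (θ * y - b θ)).toNNReal :=
    ⟨_, rfl⟩
  have hdensmeas : Measurable dens := by
    rw [hdensdef]
    exact (Real.measurable_exp.comp ((measurable_id.const_mul θ).sub_const (b θ))).real_toNNReal
  have hν' : ν = ρ.withDensity (fun y => ((dens y : ℝ≥0) : ℝ≥0∞)) := by
    rw [hν, hdensdef]; rfl
  have hsmul : (fun y => dens y • g y) = fun y => exp (θx * y - b θx) := by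
    funext y
    rw [NNReal.smul_def, hdensdef, Real.coe_toNNReal _ (exp_pos _).le]
    exact hfactor y
  have hgint : Integrable g ν := by
    rw [hν', integrable_withDensity_iff_integrable_smul hdensmeas, hsmul]
    exact htarget_int
  have hgmean : ∫ y, g y ∂ν = 1 := by
    rw [hν', integral_withDensity_eq_integral_smul hdensmeas, hsmul]
    exact htarget_val
  -- the i.i.d. weights
  obtain ⟨Y, hYdef⟩ : ∃ Y : ℕ → Ω → ℝ, Y = fun i ω => g (X i ω) := ⟨_, rfl⟩
  have hYmeas : ∀ i, Measurable (Y i) := by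
    intro i; rw [hYdef]; exact hgmeas.comp (hXmeas i)
  have hYpos : ∀ i ω, 0 < Y i ω := by
    intro i ω; rw [hYdef, hgdef]; exact exp_pos _
  have hYint : ∀ i, Integrable (Y i) P := by
    intro i
    have h1 : Integrable g (Measure.map (X i) P) := by rw [hXlaw i]; exact hgint
    have := (integrable_map_measure hgmeas.aestronglyMeasurable (hXmeas i).aemeasurable).1 h1
    rw [hYdef]; exact this
  have hYmean : ∀ i, ∫ ω, Y i ω ∂P = 1 := by
    intro i
    rw [hYdef]
    have h1 : AEStronglyMeasurable g (Measure.map (X i) P) := hgmeas.aestronglyMeasurable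
    rw [← integral_map (hXmeas i).aemeasurable h1, hXlaw i]
    exact hgmean
  have hYindep : ProbabilityTheory.iIndepFun Y P := by
    rw [hYdef]
    exact hXindep.comp (fun _ => g) (fun _ => hgmeas)
  -- products are integrable with mean one
  have hprod : ∀ m, Integrable (fun ω => ∏ i ∈ Finset.range m, Y i ω) P ∧
      ∫ ω, ∏ i ∈ Finset.range m, Y i ω ∂P = 1 := by
    intro m
    induction m with
    | zero => constructor <;> simp
    | succ n ih =>
      have hfn : (∏ k ∈ Finset.range n, Y k) = fun ω => ∏ k ∈ Finset.range n, Y k ω := by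
        funext ω; exact Finset.prod_apply ω _ _
      have hind : ProbabilityTheory.IndepFun
          (fun ω => ∏ i ∈ Finset.range n, Y i ω) (Y n) P := by
        have := hYindep.indepFun_prod_range_succ hYmeas n
        rwa [hfn] at this
      have hmeasprod : Measurable (fun ω => ∏ i ∈ Finset.range n, Y i ω) :=
        Finset.measurable_prod _ fun i _ => hYmeas i
      constructor
      · simp_rw [Finset.prod_range_succ]
        exact hind.integrable_mul ih.1 (hYint n)
      · simp_rw [Finset.prod_range_succ]
        have := ProbabilityTheory.IndepFun.integral_fun_mul_eq_mul_integral hind hmeasprod.aestronglyMeasurable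
          (hYmeas n).aestronglyMeasurable
        calc ∫ ω, (∏ i ∈ Finset.range n, Y i ω) * Y n ω ∂P
            = (∫ ω, ∏ i ∈ Finset.range n, Y i ω ∂P) * ∫ ω, Y n ω ∂P := this
          _ = 1 := by rw [ih.2, hYmean n, mul_one]
  -- the martingale
  have hXsm : ∀ i, StronglyMeasurable (X i) := fun i => (hXmeas i).stronglyMeasurable
  obtain ⟨F, hFdef⟩ : ∃ F : ℕ → Ω → ℝ, F = fun n ω => ∏ i ∈ Finset.range (n + 1), Y i ω :=
    ⟨_, rfl⟩
  have hFint : ∀ n, Integrable (F n) P := by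
    intro n; rw [hFdef]; exact (hprod (n + 1)).1
  have hFmean : ∀ n, ∫ ω, F n ω ∂P = 1 := by
    intro n; rw [hFdef]; exact (hprod (n + 1)).2
  have hadp : StronglyAdapted (Filtration.natural X hXsm) F := by
    intro n
    rw [hFdef]
    have hXn : ∀ i, i ≤ n → Measurable[Filtration.natural X hXsm n] (X i) := fun i hi =>
      ((Filtration.stronglyAdapted_natural hXsm i).mono ((Filtration.natural X hXsm).mono hi)).measurable
    refine Measurable.stronglyMeasurable ?_
    refine Finset.measurable_prod _ fun i hi => ?_
    have : Measurable[Filtration.natural X hXsm n] (X i) :=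
      hXn i (Nat.lt_succ_iff.mp (Finset.mem_range.mp hi))
    rw [hYdef]
    exact hgmeas.comp this
  have hmart : Martingale F (Filtration.natural X hXsm) P := by
    apply martingale_nat hadp hFint
    intro n
    have hsplit : F (n + 1) = F n * Y (n + 1) := by
      funext ω
      rw [hFdef]
      simp only [Pi.mul_apply]
      rw [Finset.prod_range_succ]
    have hcond : P[Y (n + 1)|(Filtration.natural X hXsm) n] =ᵐ[P] fun _ => (1 : ℝ) := by
      have hYsm : StronglyMeasurable[MeasurableSpace.comap (X (n + 1)) inferInstance]
          (Y (n + 1)) := by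
        rw [hYdef]
        exact (hgmeas.comp (comap_measurable (X (n + 1)))).stronglyMeasurable
      have hindep2 : ProbabilityTheory.Indep
          (MeasurableSpace.comap (X (n + 1)) inferInstance)
          ((Filtration.natural X hXsm) n) P :=
        ProbabilityTheory.iIndepFun.indep_comap_natural_of_lt hXsm hXindep (Nat.lt_succ_self n)
      have h := condExp_indep_eq (hXmeas (n + 1)).comap_le
        ((Filtration.natural X hXsm).le n) hYsm hindep2
      refine h.trans ?_
      rw [hYmean (n + 1)]
    calc F n = F n * fun _ => (1 : ℝ) := by funext ω; simp
      _ =ᵐ[P] F n * P[Y (n + 1)|(Filtration.natural X hXsm) n] :=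
          Filter.EventuallyEq.mul (Filter.EventuallyEq.refl _ _) hcond.symm
      _ =ᵐ[P] P[F n * Y (n + 1)|(Filtration.natural X hXsm) n] := by
          refine (condExp_mul_of_stronglyMeasurable_left (hadp n) ?_ (hYint (n + 1))).symm
          rw [← hsplit]; exact hFint (n + 1)
      _ =ᵐ[P] P[F (n + 1)|(Filtration.natural X hXsm) n] := by rw [hsplit]
  have hFnonneg : 0 ≤ F := by
    intro n
    intro ω
    rw [hFdef]
    exact (Finset.prod_pos fun i _ => hYpos i ω).le
  -- exponent bound setup
  obtain ⟨M, hM⟩ : ∃ M, N₂ = M + 1 := ⟨N₂ - 1, by omega⟩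
  obtain ⟨ε, hεdef⟩ : ∃ e : ℝ≥0, e = (exp ((N₁ : ℝ) * kl x μ)).toNNReal := ⟨_, rfl⟩
  have hεcoe : (ε : ℝ) = exp ((N₁ : ℝ) * kl x μ) := by
    rw [hεdef]; exact Real.coe_toNNReal _ (exp_pos _).le
  have hmax := maximal_ineq hmart.submartingale hFnonneg (ε := ε) M
  have hsubset : {ω | ∃ n, N₁ ≤ n ∧ n ≤ N₂ ∧ μhat n ω ≤ x} ⊆
      {ω | (ε : ℝ) ≤ (Finset.range (M + 1)).sup' Finset.nonempty_range_add_one fun k => F k ω} := by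
    rintro ω ⟨n, hn1, hn2, hn3⟩
    have hn0 : 0 < n := lt_of_lt_of_le (by omega : 0 < N₁) hn1
    have hkmem : n - 1 ∈ Finset.range (M + 1) := Finset.mem_range.2 (by omega)
    have hFval : F (n - 1) ω = exp (∑ i ∈ Finset.range n, (lam * X i ω - ψ)) := by
      rw [hFdef]
      simp only
      rw [show n - 1 + 1 = n from by omega, Real.exp_sum]
      refine Finset.prod_congr rfl fun i _ => ?_
      rw [hYdef, hgdef]
    have hsum : ∑ i ∈ Finset.range n, (lam * X i ω - ψ)
        = lam * (∑ i ∈ Finset.range n, X i ω) - n * ψ := by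
      rw [Finset.sum_sub_distrib, ← Finset.mul_sum, Finset.sum_const, Finset.card_range,
        nsmul_eq_mul]
    have hS : (∑ i ∈ Finset.range n, X i ω) ≤ n * x := by
      have h3 := hn3
      rw [hμhat] at h3
      rw [div_le_iff₀ (by positivity : (0 : ℝ) < (n : ℝ))] at h3
      linarith
    have hexp : (N₁ : ℝ) * kl x μ ≤ lam * (∑ i ∈ Finset.range n, X i ω) - n * ψ := by
      have h1 : lam * ((n : ℝ) * x) ≤ lam * (∑ i ∈ Finset.range n, X i ω) := by
        nlinarith [mul_nonneg (sub_nonneg.2 hS) (neg_nonneg.2 hlam0)]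
      have h2 : lam * ((n : ℝ) * x) - n * ψ = (n : ℝ) * kl x μ := by
        rw [hklx, hlamdef, hψdef]; ring
      have h3 : (N₁ : ℝ) * kl x μ ≤ (n : ℝ) * kl x μ :=
        mul_le_mul_of_nonneg_right (by exact_mod_cast hn1) hK0
      linarith
    show (ε : ℝ) ≤ _
    calc (ε : ℝ) = exp ((N₁ : ℝ) * kl x μ) := hεcoe
      _ ≤ F (n - 1) ω := by rw [hFval, hsum]; exact exp_le_exp.2 hexp
      _ ≤ _ := Finset.le_sup' (fun k => F k ω) hkmem
  have hεne : (ε : ℝ≥0∞) ≠ 0 := by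
    rw [hεdef]
    simp [Real.toNNReal_pos.2 (exp_pos _), (Real.toNNReal_pos.2 (exp_pos _)).ne']
  have hintle : ∫ ω in {ω | (ε : ℝ) ≤ (Finset.range (M + 1)).sup'
      Finset.nonempty_range_add_one fun k => F k ω}, F M ω ∂P ≤ 1 := by
    have h1 := setIntegral_le_integral
      (s := {ω | (ε : ℝ) ≤ (Finset.range (M + 1)).sup'
        Finset.nonempty_range_add_one fun k => F k ω})
      (hFint M) (Filter.Eventually.of_forall fun ω => hFnonneg M ω)
    rw [hFmean M] at h1
    exact h1
  have hPA : (ε : ℝ≥0∞) * P {ω | (ε : ℝ) ≤ (Finset.range (M + 1)).sup'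
      Finset.nonempty_range_add_one fun k => F k ω} ≤ 1 :=
    by
    have h := hmax
    exact h.trans ((ENNReal.ofReal_le_ofReal hintle).trans_eq ENNReal.ofReal_one)
  have hmain : P {ω | ∃ n, N₁ ≤ n ∧ n ≤ N₂ ∧ μhat n ω ≤ x} ≤
      ENNReal.ofReal (exp (-(N₁ : ℝ) * kl x μ)) := by
    have h1 := measure_mono (μ := P) hsubset
    have h2 : P {ω | (ε : ℝ) ≤ (Finset.range (M + 1)).sup'
        Finset.nonempty_range_add_one fun k => F k ω} ≤ (ε : ℝ≥0∞)⁻¹ := by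
      calc P _ = (ε : ℝ≥0∞)⁻¹ * ((ε : ℝ≥0∞) * P _) := by
            rw [← mul_assoc, ENNReal.inv_mul_cancel hεne ENNReal.coe_ne_top, one_mul]
        _ ≤ (ε : ℝ≥0∞)⁻¹ * 1 := mul_le_mul_right hPA _
        _ = _ := mul_one _
    have h3 : (ε : ℝ≥0∞)⁻¹ = ENNReal.ofReal (exp (-(N₁ : ℝ) * kl x μ)) := by
      rw [neg_mul, Real.exp_neg, ENNReal.ofReal_inv_of_pos (exp_pos _)]
      congr 1
      rw [hεdef]
      rfl
    exact le_trans h1 (le_trans h2 h3.le)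
  refine ⟨hmain, hmain.trans ?_⟩
  apply ENNReal.ofReal_le_ofReal
  apply exp_le_exp.2
  rw [mul_div_assoc, neg_mul, neg_mul, neg_le_neg_iff]
  exact mul_le_mul_of_nonneg_left hklq (Nat.cast_nonneg _)
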